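/- arXiv:0907.2098 — 6 statements merged into one kernel-verified Lean document; each statement's English description precedes it below -/
import Mathlib

section
/- If the complexity function ρ of an infinite sequence (u_n) over a finite alphabet satisfies liminf_{n→∞} ρ(n)/n < ∞, then the sequence has long repetitions: there exists ε > 0 and infinitely many natural numbers N such that the initial word u_1 u_2 … u_N contains two disjoint equal subwords each of length at least ε·N. -/
/-- Complexity function of a sequence `u` over an alphabet `A`:
the number of distinct words of length `n` occurring in `u`. -/
noncomputable def seqComplexity {A : Type*} (u : ℕ → A) (n : ℕ) : ℕ :=
  Set.ncard {w : Fin n → A | ∃ k : ℕ, ∀ i : Fin n, w i = u (k + i)}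

private lemma per_aux {A : Type*} (u : ℕ → A) (p d n : ℕ) (hd : 1 ≤ d)
    (H : ∀ j < n, u (p + j) = u (p + j + d)) :
    ∀ t i, i + t * d < n + d → u (p + i) = u (p + i + t * d) := by
  intro t
  induction t with
  | zero => intro i _; simp
  | succ t ih =>
    intro i hi
    have hmul : (t + 1) * d = t * d + d := by ring
    have h1 : i + t * d < n := by omega
    calc u (p + i) = u (p + i + t * d) := ih i (by omega)
      _ = u (p + (i + t * d)) := by rw [Nat.add_assoc]
      _ = u (p + (i + t * d) + d) := H (i + t * d) h1
      _ = u (p + i + (t + 1) * d) := by congr 1; omega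

/-- If the complexity function of a sequence over a finite alphabet satisfies
`liminf ρ(n)/n < ∞`, then the sequence has long repetitions. -/
theorem stmt0 {A : Type*} [Fintype A] (u : ℕ → A)
    (h : ∃ κ : ℝ, ∀ n₀ : ℕ, ∃ n : ℕ, n₀ ≤ n ∧ 1 ≤ n ∧
      (seqComplexity u n : ℝ) < κ * n) :
    ∃ ε : ℝ, 0 < ε ∧ ∀ N₀ : ℕ, ∃ N : ℕ, N₀ ≤ N ∧
      ∃ k m ℓ : ℕ, (ε * N ≤ (ℓ : ℝ)) ∧ k + ℓ ≤ m ∧ m + ℓ ≤ N ∧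
        ∀ i < ℓ, u (k + i) = u (m + i) := by
  classical
  obtain ⟨κ, hκ⟩ := h
  set K : ℝ := max κ 1 with hKdef
  have hK1 : (1 : ℝ) ≤ K := le_max_right _ _
  have hK0 : (0 : ℝ) < K := lt_of_lt_of_le one_pos hK1
  have hden : (0 : ℝ) < 4 * K + 2 := by nlinarith
  refine ⟨1 / (4 * K + 2), by positivity, ?_⟩
  intro N₀
  obtain ⟨n, hnN, hn1, hρn⟩ := hκ (2 * N₀)
  set ρ := seqComplexity u n with hρdef
  -- Pigeonhole: two equal words of length n at positions p < q ≤ ρ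
  have hS : {w : Fin n → A | ∃ k : ℕ, ∀ i : Fin n, w i = u (k + i)}.Finite :=
    Set.toFinite _
  have hcard : hS.toFinset.card = ρ :=
    (Set.ncard_eq_toFinset_card _ hS).symm
  obtain ⟨p, q, hpq, hqle, heq⟩ :
      ∃ p q : ℕ, p < q ∧ q ≤ ρ ∧ ∀ j < n, u (p + j) = u (q + j) := by
    have hmap : ∀ a ∈ (Finset.univ : Finset (Fin (ρ + 1))),
        (fun k : Fin (ρ + 1) => (fun i : Fin n => u (k.val + i.val))) a ∈ hS.toFinset := by
      intro a _
      simp only [Set.Finite.mem_toFinset, Set.mem_setOf_eq]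
      exact ⟨a.val, fun i => rfl⟩
    obtain ⟨x, -, y, -, hxy, hfeq⟩ :=
      Finset.exists_ne_map_eq_of_card_lt_of_maps_to
        (by rw [Finset.card_univ, Fintype.card_fin, hcard]; exact Nat.lt_succ_self ρ) hmap
    have key : ∀ (a b : Fin (ρ + 1)),
        ((fun i : Fin n => u (a.val + i.val)) = fun i : Fin n => u (b.val + i.val)) →
        ∀ j < n, u (a.val + j) = u (b.val + j) := by
      intro a b hab j hj
      exact congrFun hab ⟨j, hj⟩
    rcases Ne.lt_or_gt hxy with hlt | hlt
    · exact ⟨x.val, y.val, hlt, Nat.lt_succ_iff.mp y.isLt, key x y hfeq⟩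
    · exact ⟨y.val, x.val, hlt, Nat.lt_succ_iff.mp x.isLt, key y x hfeq.symm⟩
  set d := q - p with hddef
  have hd1 : 1 ≤ d := by omega
  have H : ∀ j < n, u (p + j) = u (p + j + d) := by
    intro j hj
    calc u (p + j) = u (q + j) := heq j hj
      _ = u (p + j + d) := by congr 1; omega
  set ℓ := (n + 1) / 2 with hℓdef
  have hℓ1 : 2 * ℓ ≤ n + 1 ∧ n ≤ 2 * ℓ ∧ 1 ≤ ℓ := by omega
  set G := ((ℓ - 1) / d) * d with hGdef
  have hG1 : G ≤ ℓ - 1 := Nat.div_mul_le_self _ _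
  have hG2 : ℓ - 1 < G + d := by
    have h3 := Nat.div_add_mod (ℓ - 1) d
    have h4 : (ℓ - 1) % d < d := Nat.mod_lt _ (by omega)
    rw [Nat.mul_comm] at h3
    omega
  set g := G + d with hgdef
  have hgt : ((ℓ - 1) / d + 1) * d = g := by
    rw [add_mul, one_mul]
  have hℓg : ℓ ≤ g := by omega
  have hgub : g ≤ ℓ + d := by omega
  have hsum : ℓ + g ≤ n + d := by omega
  refine ⟨p + g + ℓ, by omega, p, p + g, ℓ, ?_, by omega, le_refl _, ?_⟩
  · -- ε * N ≤ ℓ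
    rw [div_mul_eq_mul_div, one_mul, div_le_iff₀ hden]
    have hpρ : (p : ℝ) ≤ ρ := by exact_mod_cast (by omega : p ≤ ρ)
    have hdρ : (d : ℝ) ≤ ρ := by exact_mod_cast (by omega : d ≤ ρ)
    have hgℓ : (g : ℝ) ≤ (ℓ : ℝ) + d := by exact_mod_cast hgub
    have hρK : (ρ : ℝ) ≤ K * n := le_of_lt (lt_of_lt_of_le hρn
      (mul_le_mul_of_nonneg_right (le_max_left _ _) (Nat.cast_nonneg n)))
    have hn2ℓ : (n : ℝ) ≤ 2 * ℓ := by exact_mod_cast hℓ1.2.1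
    have hKn : K * n ≤ K * (2 * ℓ) :=
      mul_le_mul_of_nonneg_left hn2ℓ (le_of_lt hK0)
    have hℓ0 : (0 : ℝ) ≤ (ℓ : ℝ) := Nat.cast_nonneg _
    push_cast
    nlinarith
  · -- the repetition
    intro i hi
    have := per_aux u p d n hd1 H ((ℓ - 1) / d + 1) i (by rw [hgt]; omega)
    rw [hgt] at this
    calc u (p + i) = u (p + i + g) := this
      _ = u (p + g + i) := by congr 1; omega
end

section
/- If a word W has prefix AAB where AB = BC for nonempty words A, B, C, and ℓ(AA) ≤ n where n = ℓ(AB), then AAA is a prefix of W. More generally, W has a prefix consisting of k copies of A, where k = ⌊n/ℓ(A)⌋ + 1; in particular k ≥ 2 and k·ℓ(A) > n. -/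
private lemma pow_eq {α : Type*} (A B C : List α) (heq : A ++ B = B ++ C) :
    ∀ j, (List.replicate j A).flatten ++ B = B ++ (List.replicate j C).flatten := by
  intro j
  induction j with
  | zero => simp
  | succ j ih =>
    rw [List.replicate_succ', List.replicate_succ']
    simp only [List.flatten_append, List.flatten_cons, List.flatten_nil,
      List.append_nil, List.append_assoc] at *
    rw [heq, ← List.append_assoc, ih, List.append_assoc]

private lemma len_pow {α : Type*} (A : List α) (j : ℕ) :
    ((List.replicate j A).flatten).length = j * A.length := by
  induction j with
  | zero => simp
  | succ j ih => rw [List.replicate_succ]; simp [ih, Nat.succ_mul]; ring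

private lemma pow_pre {α : Type*} (A B C : List α) (n : ℕ)
    (heq : A ++ B = B ++ C) (hn : n = (A ++ B).length)
    (j : ℕ) (hj : j * A.length ≤ n) :
    (List.replicate j A).flatten <+: A ++ B := by
  cases j with
  | zero => simp
  | succ j =>
    have h1 : (List.replicate (j+1) A).flatten <+:
        (List.replicate (j+1) A).flatten ++ B := List.prefix_append _ _
    have h2 : A ++ B <+: (List.replicate (j+1) A).flatten ++ B := by
      rw [pow_eq A B C heq, heq, List.replicate_succ, List.flatten_cons,
        ← List.append_assoc]
      exact (List.prefix_append _ _)
    exact List.prefix_of_prefix_length_le h1 h2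
      (by rw [len_pow]; omega)

/-- Suppose `W` has prefix `A ++ B ++ C` with `A`, `B`, `C` nonempty and
`A ++ B = B ++ C` of length `n`. If `ℓ(AA) ≤ n` then `AAA` is a prefix of `W`;
more generally, with `k = ⌊n / ℓ(A)⌋ + 1`, the word `A^k` is a prefix of `W`,
`k ≥ 2` and `k·ℓ(A) > n`. -/
theorem stmt2 {α : Type*} (W A B C : List α) (n : ℕ)
    (hA : A ≠ []) (hB : B ≠ []) (hC : C ≠ [])
    (hpre : (A ++ B ++ C) <+: W) (heq : A ++ B = B ++ C)
    (hn : n = (A ++ B).length) :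
    (2 * A.length ≤ n → (A ++ A ++ A) <+: W) ∧
      ((List.replicate (n / A.length + 1) A).flatten <+: W ∧
        2 ≤ n / A.length + 1 ∧ n < (n / A.length + 1) * A.length) := by
  have hApos : 0 < A.length := List.length_pos_iff.mpr hA
  have hBpos : 0 < B.length := List.length_pos_iff.mpr hB
  have hpre' : A ++ (B ++ C) <+: W := by rwa [← List.append_assoc]
  constructor
  · intro h2
    have : (List.replicate 2 A).flatten <+: A ++ B :=
      pow_pre A B C n heq hn 2 (by omega)
    have h3 : A ++ A ++ A <+: A ++ (B ++ C) := by
      rw [← heq, List.append_assoc]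
      refine (List.prefix_append_right_inj A).mpr ?_
      simpa [List.replicate_succ] using this
    exact h3.trans hpre'
  · refine ⟨?_, ?_, ?_⟩
    · have hj : (n / A.length) * A.length ≤ n := Nat.div_mul_le_self n A.length
      have h1 : (List.replicate (n / A.length) A).flatten <+: A ++ B :=
        pow_pre A B C n heq hn _ hj
      have h3 : (List.replicate (n / A.length + 1) A).flatten <+: A ++ (B ++ C) := by
        rw [List.replicate_succ, List.flatten_cons, ← heq]
      -- A ++ pow <+: A ++ (A ++ B)
        exact (List.prefix_append_right_inj A).mpr h1
      exact h3.trans hpre'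
    · have : A.length ≤ n := by simp [hn]
      have := Nat.one_le_div_iff hApos |>.mpr this
      omega
    · have h1 := Nat.div_add_mod n A.length
      have h2 := Nat.mod_lt n hApos
      calc n = A.length * (n / A.length) + n % A.length := h1.symm
        _ < A.length * (n / A.length) + A.length := by omega
        _ = (n / A.length + 1) * A.length := by ring
end

section
/- For any two filtrations W = W_0 ⊇ W_1 ⊇ W_2 ⊇ … and W = W'_0 ⊇ W'_1 ⊇ W'_2 ⊇ … of a finite dimensional vector space W over a field, there exists a basis of W that is simultaneously a basis of both filtrations, i.e., a basis of W containing a basis of every W_i and a basis of every W'_i. -/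
open Submodule Module

section Aux

variable {K V : Type*} [Field K] [AddCommGroup V] [Module K V]

/-- Choice of a complement of `D` inside `A`. -/
lemma stmt3_compl (A D : Submodule K V) (hDA : D ≤ A) :
    ∃ C : Submodule K V, C ≤ A ∧ C ⊓ D = ⊥ ∧ C ⊔ D = A := by
  obtain ⟨F, hF⟩ := Submodule.exists_isCompl (D.comap A.subtype)
  have hmap : (D.comap A.subtype).map A.subtype = D := by
    rw [Submodule.map_comap_subtype, inf_eq_right.mpr hDA]
  refine ⟨F.map A.subtype, Submodule.map_subtype_le _ _, ?_, ?_⟩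
  · rw [← hmap, ← Submodule.map_inf _ (Submodule.injective_subtype A),
      hF.symm.inf_eq_bot, Submodule.map_bot]
  · rw [← hmap, ← Submodule.map_sup, hF.symm.sup_eq_top, Submodule.map_top,
      Submodule.range_subtype]

/-- Decreasing sequences of submodules of a finite dimensional space stabilize. -/
lemma stmt3_stab [FiniteDimensional K V]
    (W : ℕ → Submodule K V) (hW : ∀ i j, i ≤ j → W j ≤ W i) :
    ∃ N, ∀ i, N ≤ i → W i = W N := by
  have hne : (Set.range fun i => finrank K (W i)).Nonempty := ⟨_, ⟨0, rfl⟩⟩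
  obtain ⟨N, hN⟩ := Nat.sInf_mem hne
  exact ⟨N, fun i hi => Submodule.eq_of_le_of_finrank_le (hW N i hi)
    (hN.trans_le (Nat.sInf_le ⟨i, rfl⟩))⟩

/-- The main construction, for filtrations that are eventually `⊥`. -/
lemma stmt3_aux [FiniteDimensional K V]
    (W W' : ℕ → Submodule K V)
    (hW : ∀ i j, i ≤ j → W j ≤ W i) (hW' : ∀ i j, i ≤ j → W' j ≤ W' i)
    (hW0 : W 0 = ⊤) (hW'0 : W' 0 = ⊤)
    (M : ℕ) (hWM : ∀ i, M < i → W i = ⊥) (hW'M : ∀ i, M < i → W' i = ⊥) :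
    ∃ B : Set V, LinearIndependent K ((↑) : B → V) ∧
      (∀ i, Submodule.span K (B ∩ (W i : Set V)) = W i) ∧
      (∀ i, Submodule.span K (B ∩ (W' i : Set V)) = W' i) := by
  classical
  set A : ℕ → ℕ → Submodule K V := fun i j => W i ⊓ W' j with hA
  set D : ℕ → ℕ → Submodule K V := fun i j => A (i + 1) j ⊔ A i (j + 1) with hD
  have hDA : ∀ i j, D i j ≤ A i j := fun i j =>
    sup_le (inf_le_inf (hW i (i + 1) (by omega)) le_rfl)
      (inf_le_inf le_rfl (hW' j (j + 1) (by omega)))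
  choose C hCle hCinf hCsup using fun i j => stmt3_compl (A i j) (D i j) (hDA i j)
  have hCA : ∀ i j a b, i ≤ a → j ≤ b → C a b ≤ A i j := fun i j a b ha hb =>
    (hCle a b).trans (inf_le_inf (hW i a ha) (hW' j b hb))
  set sC : ℕ → ℕ → Submodule K V :=
    fun i j => ⨆ a, ⨆ b, ⨆ _ : i ≤ a, ⨆ _ : j ≤ b, C a b with hsC
  have le_sC : ∀ i j a b, i ≤ a → j ≤ b → C a b ≤ sC i j := fun i j a b ha hb =>
    le_iSup_of_le a (le_iSup_of_le b (le_iSup_of_le ha (le_iSup_of_le hb le_rfl)))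
  have sC_le : ∀ i j (Q : Submodule K V), (∀ a b, i ≤ a → j ≤ b → C a b ≤ Q) → sC i j ≤ Q :=
    fun i j Q h => iSup_le fun a => iSup_le fun b => iSup_le fun ha => iSup_le fun hb => h a b ha hb
  -- Fact 1: A i j is the sup of the cells below it
  have key : ∀ k i j, 2 * M + 2 ≤ i + j + k → A i j ≤ sC i j := by
    intro k
    induction k with
    | zero =>
      intro i j h
      rcases (by omega : M < i ∨ M < j) with hi | hj
      · simp only [hA, hWM i hi, bot_inf_eq]; exact bot_le
      · simp only [hA, hW'M j hj, inf_bot_eq]; exact bot_le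
    | succ k ih =>
      intro i j h
      by_cases hi : M < i
      · simp only [hA, hWM i hi, bot_inf_eq]; exact bot_le
      by_cases hj : M < j
      · simp only [hA, hW'M j hj, inf_bot_eq]; exact bot_le
      have h1 : A (i + 1) j ≤ sC i j :=
        (ih (i + 1) j (by omega)).trans
          (sC_le _ _ _ fun a b ha hb => le_sC i j a b (by omega) hb)
      have h2 : A i (j + 1) ≤ sC i j :=
        (ih i (j + 1) (by omega)).trans
          (sC_le _ _ _ fun a b ha hb => le_sC i j a b ha (by omega))
      calc A i j = C i j ⊔ D i j := (hCsup i j).symm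
        _ ≤ sC i j := sup_le (le_sC i j i j le_rfl le_rfl) (sup_le h1 h2)
  have supA : ∀ i j, A i j = sC i j := fun i j =>
    le_antisymm (key (2 * M + 2) i j (by omega)) (sC_le _ _ _ fun a b ha hb => hCA i j a b ha hb)
  -- Core independence fact
  have core : ∀ (s : Finset (ℕ × ℕ)) (x : ℕ × ℕ → V), (∀ p, x p ∈ C p.1 p.2) →
      ∑ p ∈ s, x p = 0 → ∀ p ∈ s, x p = 0 := by
    intro s x hx hsum
    by_contra hcon
    push_neg at hcon
    set T := s.filter (fun p => x p ≠ 0) with hT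
    have hTne : T.Nonempty := by
      obtain ⟨p, hp, hxp⟩ := hcon
      exact ⟨p, Finset.mem_filter.mpr ⟨hp, hxp⟩⟩
    set i₀ := (T.image Prod.fst).min' (hTne.image _) with hi₀
    set T₀ := T.filter (fun p => p.1 = i₀) with hT₀
    have hT₀ne : T₀.Nonempty := by
      obtain ⟨p, hp, hp1⟩ := Finset.mem_image.mp ((T.image Prod.fst).min'_mem (hTne.image _))
      exact ⟨p, Finset.mem_filter.mpr ⟨hp, hp1⟩⟩
    set j₀ := (T₀.image Prod.snd).min' (hT₀ne.image _) with hj₀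
    have hq₀T : (i₀, j₀) ∈ T := by
      obtain ⟨p, hp, hp2⟩ := Finset.mem_image.mp ((T₀.image Prod.snd).min'_mem (hT₀ne.image _))
      have hp1 : p.1 = i₀ := (Finset.mem_filter.mp hp).2
      have : p = (i₀, j₀) := Prod.ext hp1 hp2
      exact this ▸ (Finset.mem_filter.mp hp).1
    set q₀ : ℕ × ℕ := (i₀, j₀) with hq₀
    have hq₀s : q₀ ∈ s := (Finset.mem_filter.mp hq₀T).1
    have hxq₀ : x q₀ ≠ 0 := (Finset.mem_filter.mp hq₀T).2
    -- minimality facts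
    have hmin1 : ∀ p ∈ s, p.1 < i₀ → x p = 0 := by
      intro p hp hlt
      by_contra hne
      exact absurd ((T.image Prod.fst).min'_le p.1
        (Finset.mem_image_of_mem _ (Finset.mem_filter.mpr ⟨hp, hne⟩))) (by omega)
    have hmin2 : ∀ p ∈ s, p.1 = i₀ → p.2 < j₀ → x p = 0 := by
      intro p hp h1 hlt
      by_contra hne
      exact absurd ((T₀.image Prod.snd).min'_le p.2
        (Finset.mem_image_of_mem _
          (Finset.mem_filter.mpr ⟨Finset.mem_filter.mpr ⟨hp, hne⟩, h1⟩))) (by omega)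
    -- split the sum
    have hsplit : x q₀ + ((∑ p ∈ (s.erase q₀).filter (fun p => p.1 = i₀), x p)
        + ∑ p ∈ (s.erase q₀).filter (fun p => ¬ p.1 = i₀), x p) = 0 := by
      rw [Finset.sum_filter_add_sum_filter_not, Finset.add_sum_erase _ _ hq₀s]
      exact hsum
    set u := ∑ p ∈ (s.erase q₀).filter (fun p => p.1 = i₀), x p with hu_def
    set w := ∑ p ∈ (s.erase q₀).filter (fun p => ¬ p.1 = i₀), x p with hw_def
    have hu : u ∈ A i₀ (j₀ + 1) := by
      apply Submodule.sum_mem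
      intro p hp
      obtain ⟨hpe, hp1⟩ := Finset.mem_filter.mp hp
      have hps : p ∈ s := Finset.mem_of_mem_erase hpe
      rcases lt_trichotomy p.2 j₀ with h | h | h
      · rw [hmin2 p hps hp1 h]; exact Submodule.zero_mem _
      · exact absurd (Prod.ext hp1 h) (Finset.ne_of_mem_erase hpe)
      · exact hCA i₀ (j₀ + 1) p.1 p.2 (le_of_eq hp1.symm) (by omega) (hx p)
    have hw : w ∈ W (i₀ + 1) := by
      apply Submodule.sum_mem
      intro p hp
      obtain ⟨hpe, hp1⟩ := Finset.mem_filter.mp hp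
      have hps : p ∈ s := Finset.mem_of_mem_erase hpe
      rcases lt_or_gt_of_ne (fun h => hp1 h) with h | h
      · rw [hmin1 p hps h]; exact Submodule.zero_mem _
      · exact ((hCle p.1 p.2).trans inf_le_left).trans (hW (i₀ + 1) p.1 (by omega)) (hx p)
    have hxu : x q₀ + u ∈ A (i₀ + 1) j₀ := by
      constructor
      · have : x q₀ + u = -w := by linear_combination (norm := module) hsplit
        rw [this]
        exact Submodule.neg_mem _ hw
      · exact Submodule.add_mem _ ((hCle i₀ j₀ (hx q₀)).2)
          (hW' j₀ (j₀ + 1) (by omega) hu.2)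
    have hxD : x q₀ ∈ D i₀ j₀ := by
      have : x q₀ = (x q₀ + u) - u := by abel
      rw [this]
      exact Submodule.sub_mem _ (le_sup_left (a := A (i₀ + 1) j₀) hxu)
        (le_sup_right (b := A i₀ (j₀ + 1)) hu)
    have : x q₀ ∈ C i₀ j₀ ⊓ D i₀ j₀ := ⟨hx q₀, hxD⟩
    rw [hCinf i₀ j₀] at this
    exact hxq₀ this
    -- independence
  have hind : iSupIndep (fun p : ℕ × ℕ => C p.1 p.2) := by
    apply iSupIndep_of_dfinsupp_lsum_injective
    rw [← LinearMap.ker_eq_bot, LinearMap.ker_eq_bot']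
    intro m hm
    have hm' : ∑ p ∈ m.support, ((m p : V)) = 0 := by
      rw [← hm]
      simp [DFinsupp.lsum_apply_apply, DFinsupp.sumAddHom_apply, DFinsupp.sum]
    have := core m.support (fun p => (m p : V)) (fun p => (m p).2) hm'
    ext p : 1
    by_cases hp : p ∈ m.support
    · exact Subtype.ext (this p hp)
    · simpa using DFinsupp.notMem_support_iff.mp hp
  have hsup : (⨆ p : ℕ × ℕ, C p.1 p.2) = ⊤ := by
    rw [eq_top_iff]
    have h1 : A 0 0 = ⊤ := by simp [hA, hW0, hW'0]
    have h2 : sC 0 0 ≤ ⨆ p : ℕ × ℕ, C p.1 p.2 :=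
      sC_le 0 0 _ fun a b _ _ => le_iSup_of_le (a, b) le_rfl
    calc (⊤ : Submodule K V) = sC 0 0 := by rw [← h1, supA]
      _ ≤ _ := h2
  have hInt : DirectSum.IsInternal (fun p : ℕ × ℕ => C p.1 p.2) :=
    DirectSum.isInternal_submodule_of_iSupIndep_of_iSup_eq_top hind hsup
  set v : ∀ p : ℕ × ℕ, Basis (Basis.ofVectorSpaceIndex K (C p.1 p.2)) K (C p.1 p.2) :=
    fun p => Basis.ofVectorSpace K (C p.1 p.2) with hv
  set bb := hInt.collectedBasis v with hbb
  have hC_span : ∀ p : ℕ × ℕ,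
      Submodule.span K (Set.range fun k => ((v p k : V))) = C p.1 p.2 := by
    intro p
    have := congrArg (Submodule.map (C p.1 p.2).subtype) (v p).span_eq
    rwa [Submodule.map_span, Submodule.map_top, Submodule.range_subtype,
      ← Set.range_comp] at this
  have main : ∀ (U : ℕ → Submodule K V) (i : ℕ),
      (∀ a b, (i ≤ a ∧ U = W) ∨ (i ≤ b ∧ U = W') → C a b ≤ U i) →
      U i ≤ Submodule.span K (Set.range bb ∩ (U i : Set V)) → True := fun _ _ _ _ => trivial
  refine ⟨Set.range bb, bb.linearIndependent.linearIndepOn_id, ?_, ?_⟩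
  · intro i
    refine le_antisymm (Submodule.span_le.mpr fun z hz => hz.2) ?_
    have hWi : W i = sC i 0 := by
      rw [← supA i 0]; simp [hA, hW'0]
    refine hWi.trans_le (sC_le i 0 _ ?_)
    intro a b ha _
    rw [← hC_span (a, b)]
    apply Submodule.span_mono
    rintro z ⟨k, rfl⟩
    refine ⟨⟨⟨(a, b), k⟩, ?_⟩, ?_⟩
    · rw [hInt.collectedBasis_coe]
    · exact (hCle a b).trans (inf_le_left.trans (hW i a ha)) (v (a, b) k).2
  · intro j
    refine le_antisymm (Submodule.span_le.mpr fun z hz => hz.2) ?_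
    have hWj : W' j = sC 0 j := by
      rw [← supA 0 j]; simp [hA, hW0]
    refine hWj.trans_le (sC_le 0 j _ ?_)
    intro a b _ hb
    rw [← hC_span (a, b)]
    apply Submodule.span_mono
    rintro z ⟨k, rfl⟩
    refine ⟨⟨⟨(a, b), k⟩, ?_⟩, ?_⟩
    · rw [hInt.collectedBasis_coe]
    · exact (hCle a b).trans (inf_le_right.trans (hW' j b hb)) (v (a, b) k).2

end Aux

/-- Any two filtrations of a finite dimensional vector space admit a common
basis: a basis of `W` whose intersection with each member of either filtration
is a basis (spanning set of independent vectors) of that member. -/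
theorem stmt3 {K V : Type*} [Field K] [AddCommGroup V] [Module K V]
    [FiniteDimensional K V]
    (W W' : ℕ → Submodule K V)
    (hW : ∀ i j, i ≤ j → W j ≤ W i) (hW' : ∀ i j, i ≤ j → W' j ≤ W' i)
    (hW0 : W 0 = ⊤) (hW'0 : W' 0 = ⊤) :
    ∃ B : Set V, LinearIndependent K ((↑) : B → V) ∧
      (∀ i, Submodule.span K (B ∩ (W i : Set V)) = W i) ∧
      (∀ i, Submodule.span K (B ∩ (W' i : Set V)) = W' i) := by
  classical
  obtain ⟨N, hN⟩ := stmt3_stab W hW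
  obtain ⟨N', hN'⟩ := stmt3_stab W' hW'
  set M := max N N' with hM
  have hMW : ∀ i, M ≤ i → W i = W M :=
    fun i hi => (hN i (le_trans (le_max_left _ _) hi)).trans (hN M (le_max_left _ _)).symm
  have hMW' : ∀ i, M ≤ i → W' i = W' M :=
    fun i hi => (hN' i (le_trans (le_max_right _ _) hi)).trans (hN' M (le_max_right _ _)).symm
  set Wt : ℕ → Submodule K V := fun i => if i ≤ M then W i else ⊥ with hWt
  set Wt' : ℕ → Submodule K V := fun i => if i ≤ M then W' i else ⊥ with hWt'
  have hWtE : ∀ i, i ≤ M → Wt i = W i := fun i hi => if_pos hi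
  have hWtE' : ∀ i, i ≤ M → Wt' i = W' i := fun i hi => if_pos hi
  have hWtmono : ∀ i j, i ≤ j → Wt j ≤ Wt i := by
    intro i j hij
    by_cases hj : j ≤ M
    · rw [hWtE i (by omega), hWtE j hj]; exact hW i j hij
    · show (if j ≤ M then W j else ⊥) ≤ _
      rw [if_neg hj]; exact bot_le
  have hWtmono' : ∀ i j, i ≤ j → Wt' j ≤ Wt' i := by
    intro i j hij
    by_cases hj : j ≤ M
    · rw [hWtE' i (by omega), hWtE' j hj]; exact hW' i j hij
    · show (if j ≤ M then W' j else ⊥) ≤ _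
      rw [if_neg hj]; exact bot_le
  obtain ⟨B, hB, h1, h2⟩ := stmt3_aux Wt Wt' hWtmono hWtmono'
    (by rw [hWtE 0 (Nat.zero_le _)]; exact hW0)
    (by rw [hWtE' 0 (Nat.zero_le _)]; exact hW'0)
    M (fun i hi => if_neg (by omega)) (fun i hi => if_neg (by omega))
  refine ⟨B, hB, ?_, ?_⟩
  · intro i
    by_cases hi : i ≤ M
    · rw [← hWtE i hi]; exact h1 i
    · rw [hMW i (by omega), ← hWtE M le_rfl]; exact h1 M
  · intro i
    by_cases hi : i ≤ M
    · rw [← hWtE' i hi]; exact h2 i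
    · rw [hMW' i (by omega), ← hWtE' M le_rfl]; exact h2 M
end

section
/- Let M = [μ_{ij}] be a symmetric r×r real matrix with all entries positive, let L_i(x) = μ_{i1}x_1 + … + μ_{ir}x_r and Q(x) = xᵀMx. Then for any ε > 0 there exist positive integers a_1, …, a_r such that (1−ε)·Q(a) < r·a_i·L_i(a) < (1+ε)·Q(a) for every i = 1, …, r, where a = (a_1,…,a_r). -/
open Filter Finset Topology

lemma g_lb {c : ℝ} (hc : 0 < c) {t : ℝ} (ht : 0 < t) :
    1 - 1/(2*c) ≤ c * t^2/2 - Real.log t := by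
  have h := Real.log_le_sub_one_of_pos ht
  have key : c*t^2/2 - (t-1) - (1 - 1/(2*c)) = (c*t-1)^2/(2*c) := by
    field_simp; ring
  nlinarith [div_nonneg (sq_nonneg (c*t-1)) (by positivity : (0:ℝ) ≤ 2*c)]

lemma g_top {c : ℝ} (hc : 0 < c) :
    Tendsto (fun t => c * t^2/2 - Real.log t) atTop atTop := by
  have h1 : Tendsto (fun t : ℝ => c * t / 2 - 1) atTop atTop := by
    have h0 := (tendsto_id : Tendsto id (atTop : Filter ℝ) atTop).const_mul_atTop hc
    have h2 := h0.atTop_div_const (two_pos (α := ℝ))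
    simpa [sub_eq_add_neg] using tendsto_atTop_add_const_right _ (-1) h2
  have h2 : Tendsto (fun t : ℝ => t * (c * t / 2 - 1) + 1) atTop atTop :=
    tendsto_atTop_add_const_right _ 1 (tendsto_id.atTop_mul_atTop₀ h1)
  refine tendsto_atTop_mono' _ ?_ h2
  filter_upwards [eventually_gt_atTop (0:ℝ)] with t ht
  have h := Real.log_le_sub_one_of_pos ht
  nlinarith

lemma g_bot (c : ℝ) :
    Tendsto (fun t => c * t^2/2 - Real.log t) (𝓝[>] (0:ℝ)) atTop := by
  have h1 : Tendsto (fun t : ℝ => -Real.log t) (𝓝[>] (0:ℝ)) atTop :=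
    tendsto_neg_atBot_atTop.comp Real.tendsto_log_nhdsGT_zero
  have h2 : Tendsto (fun t : ℝ => c * t^2/2) (𝓝[>] (0:ℝ)) (𝓝 (c * 0^2/2)) :=
    ((continuous_const.mul (continuous_pow 2)).div_const 2).continuousWithinAt
  exact (Filter.Tendsto.add_atTop h2 h1).congr (fun t => by ring)

lemma exists_balanced {r : ℕ} (M : Matrix (Fin r) (Fin r) ℝ)
    (hsymm : M.IsSymm) (hpos : ∀ i j, 0 < M i j) :
    ∃ x : Fin r → ℝ, (∀ i, 0 < x i) ∧ ∀ i, x i * (∑ j, M i j * x j) = 1 := by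
  classical
  set F : (Fin r → ℝ) → ℝ :=
    fun x => (∑ i, x i * ∑ j, M i j * x j) / 2 - ∑ i, Real.log (x i) with hF
  set g : Fin r → ℝ → ℝ := fun i t => M i i * t^2/2 - Real.log t with hg
  set B : Fin r → ℝ := fun i => 1 - 1/(2 * M i i) with hB
  set C : ℝ := F (fun _ => 1) with hC
  set D : Fin r → ℝ := fun i => C - ∑ j, B j + B i with hD
  -- F dominates the sum of the g's on the positive orthant
  have hFge : ∀ x : Fin r → ℝ, (∀ i, 0 < x i) → ∑ i, g i (x i) ≤ F x := by
    intro x hx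
    have hFx : F x = ∑ i, ((x i * ∑ j, M i j * x j)/2 - Real.log (x i)) := by
      simp only [hF]
      rw [Finset.sum_div, Finset.sum_sub_distrib]
    rw [hFx]
    refine Finset.sum_le_sum fun i _ => ?_
    have h1 : M i i * x i ≤ ∑ j, M i j * x j :=
      Finset.single_le_sum (f := fun j => M i j * x j)
        (fun j _ => (mul_pos (hpos i j) (hx j)).le) (Finset.mem_univ i)
    have h2 : M i i * (x i)^2 ≤ x i * ∑ j, M i j * x j := by
      have := mul_le_mul_of_nonneg_left h1 (hx i).le
      nlinarith
    simp only [hg]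
    linarith
  -- thresholds
  have hthr : ∀ i : Fin r, ∃ lo hi : ℝ, 0 < lo ∧ lo ≤ 1 ∧ 1 ≤ hi ∧
      (∀ t, 0 < t → t < lo → D i < g i t) ∧ (∀ t, hi < t → D i < g i t) := by
    intro i
    have htop := (g_top (hpos i i)).eventually_gt_atTop (D i)
    rw [eventually_atTop] at htop
    obtain ⟨R, hR⟩ := htop
    have hbot := (g_bot (M i i)).eventually_gt_atTop (D i)
    rw [eventually_nhdsWithin_iff] at hbot
    rw [Metric.eventually_nhds_iff] at hbot
    obtain ⟨δ, hδ, hδ'⟩ := hbot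
    refine ⟨min δ 1, max R 1, by positivity, min_le_right _ _, le_max_right _ _, ?_, ?_⟩
    · intro t ht ht'
      have : dist t 0 < δ := by
        rw [Real.dist_eq, sub_zero, abs_of_pos ht]
        exact lt_of_lt_of_le ht' (min_le_left _ _)
      exact hδ' this ht
    · intro t ht
      exact hR t (le_of_lt (lt_of_le_of_lt (le_max_left _ _) ht))
  choose lo hi hlo0 hlo1 hhi1 hlow hhigh using hthr
  -- compact box
  set K : Set (Fin r → ℝ) := Set.univ.pi (fun i => Set.Icc (lo i) (hi i)) with hK
  have hKc : IsCompact K := isCompact_univ_pi (fun i => isCompact_Icc)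
  have hone : (fun _ => (1:ℝ)) ∈ K := by
    intro i _; exact ⟨hlo1 i, hhi1 i⟩
  have hKne : K.Nonempty := ⟨_, hone⟩
  have hKpos : ∀ x ∈ K, ∀ i, 0 < x i := by
    intro x hx i
    exact lt_of_lt_of_le (hlo0 i) (hx i (Set.mem_univ i)).1
  have hFcont : ContinuousOn F K := by
    apply ContinuousOn.sub
    · exact Continuous.continuousOn <|
        (continuous_finset_sum _ fun i _ => (continuous_apply i).mul
          (continuous_finset_sum _ fun j _ =>
            continuous_const.mul (continuous_apply j))).div_const 2
    · refine continuousOn_finset_sum _ fun i _ => ?_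
      refine Real.continuousOn_log.comp (continuous_apply i).continuousOn ?_
      intro x hx
      exact ne_of_gt (hKpos x hx i)
  obtain ⟨x, hxK, hxmin⟩ := hKc.exists_isMinOn hKne hFcont
  have hxpos : ∀ i, 0 < x i := hKpos x hxK
  -- global min over the open positive orthant S
  set S : Set (Fin r → ℝ) := Set.univ.pi (fun _ => Set.Ioi 0) with hS
  have hSx : x ∈ S := fun i _ => hxpos i
  have hSopen : IsOpen S := isOpen_set_pi Set.finite_univ (fun i _ => isOpen_Ioi)
  have hminS : IsMinOn F S x := by
    intro y hy
    have hypos : ∀ i, 0 < y i := fun i => hy i (Set.mem_univ i)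
    by_cases hyK : y ∈ K
    · exact hxmin hyK
    · -- some coordinate escapes
      have : ∃ i, y i < lo i ∨ hi i < y i := by
        by_contra h
        push_neg at h
        exact hyK (fun i _ => ⟨(h i).1, (h i).2⟩)
      obtain ⟨i, hesc⟩ := this
      have hgi : D i < g i (y i) := by
        rcases hesc with h | h
        · exact hlow i _ (hypos i) h
        · exact hhigh i _ h
      have hsum : g i (y i) + ∑ j ∈ Finset.univ.erase i, B j ≤ ∑ j, g j (y j) := by
        rw [← Finset.add_sum_erase _ _ (Finset.mem_univ i)]
        gcongr with j hj
        exact g_lb (hpos j j) (hypos j)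
      have herase : ∑ j ∈ Finset.univ.erase i, B j = ∑ j, B j - B i :=
        Finset.sum_erase_eq_sub (Finset.mem_univ i)
      have h1 : C < ∑ j, g j (y j) := by
        rw [herase] at hsum
        simp only [hD] at hgi
        linarith
      have h2 : F x ≤ C := hxmin hone
      have h3 := hFge y hypos
      simp only [Set.mem_setOf_eq]
      linarith
  have hloc : IsLocalMin F x := hminS.isLocalMin (hSopen.mem_nhds hSx)
  refine ⟨x, hxpos, fun i => ?_⟩
  -- first order condition in coordinate i
  set A : ℝ := M i i with hA
  set Bc : ℝ := ∑ j ∈ Finset.univ.erase i, M i j * x j with hBc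
  set E : Fin r → ℝ := fun k => ∑ l ∈ Finset.univ.erase i, M k l * x l with hE
  set C0 : ℝ := ∑ k ∈ Finset.univ.erase i, x k * E k with hC0
  set C2 : ℝ := ∑ k ∈ Finset.univ.erase i, Real.log (x k) with hC2
  set u : ℝ → (Fin r → ℝ) := fun t => Function.update x i t with hu
  have hinner : ∀ t, ∑ l, M i l * u t l = A * t + Bc := by
    intro t
    rw [← Finset.add_sum_erase _ _ (Finset.mem_univ i)]
    simp only [hu, Function.update_self]
    congr 1
    refine Finset.sum_congr rfl fun l hl => ?_
    rw [Function.update_of_ne (Finset.ne_of_mem_erase hl)]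
  have hquad : ∀ t, ∑ k, u t k * ∑ l, M k l * u t l = A*t^2 + 2*Bc*t + C0 := by
    intro t
    rw [← Finset.add_sum_erase _ _ (Finset.mem_univ i)]
    have h2 : ∀ k ∈ Finset.univ.erase i,
        u t k * ∑ l, M k l * u t l = x k * M k i * t + x k * E k := by
      intro k hk
      have hki : k ≠ i := Finset.ne_of_mem_erase hk
      rw [hu]
      simp only [Function.update_of_ne hki]
      rw [← Finset.add_sum_erase _ _ (Finset.mem_univ i)]
      simp only [Function.update_self]
      have : ∑ l ∈ Finset.univ.erase i, M k l * Function.update x i t l = E k := by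
        refine Finset.sum_congr rfl fun l hl => ?_
        rw [Function.update_of_ne (Finset.ne_of_mem_erase hl)]
      rw [this]; ring
    rw [Finset.sum_congr rfl h2, Finset.sum_add_distrib, ← Finset.sum_mul]
    have h3 : ∑ k ∈ Finset.univ.erase i, x k * M k i = Bc := by
      rw [hBc]
      refine Finset.sum_congr rfl fun k hk => ?_
      rw [hsymm.apply i k]; ring
    rw [h3, hinner t]
    simp only [hu, Function.update_self]
    ring
  have hlogpart : ∀ t, ∑ k, Real.log (u t k) = Real.log t + C2 := by
    intro t
    rw [← Finset.add_sum_erase _ _ (Finset.mem_univ i)]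
    simp only [hu, Function.update_self]
    congr 1
    refine Finset.sum_congr rfl fun l hl => ?_
    rw [Function.update_of_ne (Finset.ne_of_mem_erase hl)]
  have hFu : ∀ t, F (u t) = (A*t^2 + 2*Bc*t + C0)/2 - Real.log t - C2 := by
    intro t
    rw [hF]
    simp only
    rw [hquad t, hlogpart t]
    ring
  -- local min of φ at x i
  have hucont : Continuous u := by
    apply continuous_pi
    intro k
    by_cases hk : k = i
    · subst hk; simpa [hu] using continuous_id'
    · simpa [hu, Function.update_of_ne hk] using continuous_const
  have huxi : u (x i) = x := Function.update_eq_self i x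
  have hlocφ : IsLocalMin (fun t => F (u t)) (x i) := by
    have htend : Tendsto u (𝓝 (x i)) (𝓝 (u (x i))) := hucont.continuousAt
    rw [huxi] at htend
    have := htend.eventually hloc
    exact this.mono fun t ht => by simpa [huxi] using ht
  have hder : HasDerivAt (fun t => F (u t)) (A * x i + Bc - (x i)⁻¹) (x i) := by
    have h1 : HasDerivAt (fun t : ℝ => (A*t^2 + 2*Bc*t + C0)/2 - Real.log t - C2)
        (A * x i + Bc - (x i)⁻¹) (x i) := by
      have hq : HasDerivAt (fun t : ℝ => (A*t^2 + 2*Bc*t + C0)/2) (A * x i + Bc) (x i) := by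
        have hp : HasDerivAt (fun t : ℝ => A*t^2 + 2*Bc*t + C0)
            (A * (2 * x i) + 2*Bc) (x i) := by
          have := (((hasDerivAt_pow 2 (x i)).const_mul A).add
            ((hasDerivAt_id (x i)).const_mul (2*Bc))).add_const C0
          refine this.congr_deriv ?_
          simp
          try ring
        have := hp.div_const 2
        refine this.congr_deriv ?_
        ring
      have hl : HasDerivAt Real.log (x i)⁻¹ (x i) := Real.hasDerivAt_log (ne_of_gt (hxpos i))
      exact (hq.sub hl).sub_const C2
    exact h1.congr_of_eventuallyEq (Filter.Eventually.of_forall fun t => (hFu t))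
  have hzero : A * x i + Bc - (x i)⁻¹ = 0 := hlocφ.hasDerivAt_eq_zero hder
  have hLi : ∑ j, M i j * x j = A * x i + Bc := by
    have := hinner (x i)
    rwa [huxi] at this
  rw [hLi]
  have : A * x i + Bc = (x i)⁻¹ := by linarith
  rw [this]
  exact mul_inv_cancel₀ (ne_of_gt (hxpos i))



/-- Lemma of Autissier/Levin: for a symmetric matrix `M` with positive entries,
with linear forms `L i` and quadratic form `Q`, for every `ε > 0` there are
positive integers `a₁,…,a_r` with `(1−ε)Q(a) < r·aᵢ·Lᵢ(a) < (1+ε)Q(a)` for all `i`. -/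
theorem stmt4 {r : ℕ} (hr : 0 < r) (M : Matrix (Fin r) (Fin r) ℝ)
    (hsymm : M.IsSymm) (hpos : ∀ i j, 0 < M i j)
    (L : (Fin r → ℝ) → Fin r → ℝ)
    (hL : ∀ x i, L x i = ∑ j, M i j * x j)
    (Q : (Fin r → ℝ) → ℝ)
    (hQ : ∀ x, Q x = ∑ i, x i * L x i)
    (ε : ℝ) (hε : 0 < ε) :
    ∃ a : Fin r → ℕ, (∀ i, 0 < a i) ∧
      ∀ i, (1 - ε) * Q (fun j => (a j : ℝ)) <
            (r : ℝ) * (a i : ℝ) * L (fun j => (a j : ℝ)) i ∧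
          (r : ℝ) * (a i : ℝ) * L (fun j => (a j : ℝ)) i <
            (1 + ε) * Q (fun j => (a j : ℝ)) := by
  classical
  obtain ⟨x, hxpos, hxbal⟩ := exists_balanced M hsymm hpos
  set P : (Fin r → ℝ) → ℝ := fun y => ∑ i, y i * ∑ j, M i j * y j with hP
  set R : (Fin r → ℝ) → Fin r → ℝ := fun y i => y i * ∑ j, M i j * y j with hR
  have hQP : ∀ y, Q y = P y := by
    intro y
    rw [hQ, hP]
    exact Finset.sum_congr rfl fun i _ => by rw [hL]
  have hPx : P x = r := by
    rw [hP]
    simp only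
    rw [Finset.sum_congr rfl (fun i _ => hxbal i)]
    simp
  have hRx : ∀ i, R x i = 1 := fun i => hxbal i
  -- integer approximants
  set a : ℕ → Fin r → ℕ := fun N j => ⌈(N:ℝ) * x j⌉₊ with ha
  set y : ℕ → Fin r → ℝ := fun N j => (a N j : ℝ) / N with hy
  have hytend : Tendsto y atTop (𝓝 x) := by
    rw [tendsto_pi_nhds]
    intro j
    have hup : Tendsto (fun N : ℕ => x j + 1/(N:ℝ)) atTop (𝓝 (x j + 0)) :=
      tendsto_const_nhds.add tendsto_one_div_atTop_nhds_zero_nat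
    rw [add_zero] at hup
    refine tendsto_of_tendsto_of_tendsto_of_le_of_le' tendsto_const_nhds hup ?_ ?_
    · filter_upwards [eventually_ge_atTop 1] with N hN
      have hN0 : (0:ℝ) < N := by exact_mod_cast hN
      rw [hy]
      simp only
      rw [le_div_iff₀ hN0]
      calc x j * N = (N:ℝ) * x j := by ring
        _ ≤ (a N j : ℝ) := Nat.le_ceil _
    · filter_upwards [eventually_ge_atTop 1] with N hN
      have hN0 : (0:ℝ) < N := by exact_mod_cast hN
      rw [hy]
      simp only
      rw [div_le_iff₀ hN0]
      have h1 : (a N j : ℝ) ≤ (N:ℝ) * x j + 1 := by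
        rw [ha]
        exact le_of_lt (Nat.ceil_lt_add_one (mul_nonneg (Nat.cast_nonneg N) (hxpos j).le))
      calc (a N j : ℝ) ≤ (N:ℝ) * x j + 1 := h1
        _ ≤ (x j + 1/(N:ℝ)) * N := by
            rw [add_mul, div_mul_cancel₀ _ (ne_of_gt hN0)]
            ring_nf
            exact le_refl _
  have hPcont : Continuous P :=
    continuous_finset_sum _ fun i _ => (continuous_apply i).mul
      (continuous_finset_sum _ fun j _ => continuous_const.mul (continuous_apply j))
  have hRcont : ∀ i, Continuous (fun z => R z i) := fun i =>
    (continuous_apply i).mul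
      (continuous_finset_sum _ fun j _ => continuous_const.mul (continuous_apply j))
  have hPt : Tendsto (fun N => P (y N)) atTop (𝓝 (P x)) :=
    (hPcont.tendsto x).comp hytend
  have hRt : ∀ i, Tendsto (fun N => R (y N) i) atTop (𝓝 (R x i)) := fun i =>
    ((hRcont i).tendsto x).comp hytend
  have hev : ∀ᶠ N in atTop, ∀ i : Fin r,
      (1-ε) * P (y N) < (r:ℝ) * R (y N) i ∧ (r:ℝ) * R (y N) i < (1+ε) * P (y N) := by
    rw [Filter.eventually_all]
    intro i
    have hlt1 : (1-ε) * P x < (r:ℝ) * R x i := by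
      rw [hPx, hRx i]
      have : (0:ℝ) < r := by exact_mod_cast hr
      nlinarith
    have hlt2 : (r:ℝ) * R x i < (1+ε) * P x := by
      rw [hPx, hRx i]
      have : (0:ℝ) < r := by exact_mod_cast hr
      nlinarith
    have e1 : ∀ᶠ N in atTop, (1-ε) * P (y N) < (r:ℝ) * R (y N) i :=
      (tendsto_const_nhds.mul hPt).eventually_lt (tendsto_const_nhds.mul (hRt i)) hlt1
    have e2 : ∀ᶠ N in atTop, (r:ℝ) * R (y N) i < (1+ε) * P (y N) :=
      (tendsto_const_nhds.mul (hRt i)).eventually_lt (tendsto_const_nhds.mul hPt) hlt2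
    exact e1.and e2
  obtain ⟨N, hN1, hNineq⟩ := ((eventually_ge_atTop 1).and hev).exists
  refine ⟨a N, ?_, ?_⟩
  · intro i
    rw [ha]
    refine Nat.ceil_pos.mpr ?_
    have hN0 : (0:ℝ) < N := by exact_mod_cast hN1
    exact mul_pos hN0 (hxpos i)
  · intro i
    have hN0 : (0:ℝ) < N := by exact_mod_cast hN1
    have hcoe : ∀ j, ((a N j : ℝ)) = (N:ℝ) * y N j := by
      intro j
      rw [hy]
      field_simp
    -- scaling identities
    have hLscale : L (fun j => ((a N j : ℝ))) i = (N:ℝ) * ∑ j, M i j * y N j := by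
      rw [hL, Finset.mul_sum]
      refine Finset.sum_congr rfl fun j _ => ?_
      rw [hcoe j]; ring
    have hQscale : Q (fun j => ((a N j : ℝ))) = (N:ℝ)^2 * P (y N) := by
      rw [hQP, hP]
      simp only
      rw [Finset.mul_sum]
      refine Finset.sum_congr rfl fun k _ => ?_
      have hinner : ∑ j, M k j * ((a N j : ℝ)) = (N:ℝ) * ∑ j, M k j * y N j := by
        rw [Finset.mul_sum]
        refine Finset.sum_congr rfl fun j _ => ?_
        rw [hcoe j]; ring
      rw [hinner, hcoe k]; ring
    have hmain := hNineq i
    have hN2 : (0:ℝ) < (N:ℝ)^2 := by positivity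
    constructor
    · rw [hQscale, hLscale, hcoe i]
      calc (1-ε) * ((N:ℝ)^2 * P (y N)) = (N:ℝ)^2 * ((1-ε) * P (y N)) := by ring
        _ < (N:ℝ)^2 * ((r:ℝ) * R (y N) i) := by
            exact mul_lt_mul_of_pos_left hmain.1 hN2
        _ = (r:ℝ) * ((N:ℝ) * y N i) * ((N:ℝ) * ∑ j, M i j * y N j) := by
            rw [hR]; ring
    · rw [hQscale, hLscale, hcoe i]
      calc (r:ℝ) * ((N:ℝ) * y N i) * ((N:ℝ) * ∑ j, M i j * y N j)
          = (N:ℝ)^2 * ((r:ℝ) * R (y N) i) := by rw [hR]; ring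
        _ < (N:ℝ)^2 * ((1+ε) * P (y N)) := mul_lt_mul_of_pos_left hmain.2 hN2
        _ = (1+ε) * ((N:ℝ)^2 * P (y N)) := by ring
end

section
/- Let M be a symmetric r×r real matrix with all entries positive, and let L_i(x) = Σ_j μ_{ij} x_j. Then there exists a point a = (a_1,…,a_r) with all coordinates strictly positive real numbers and a_1 + … + a_r = 1 such that a_1 L_1(a) = a_2 L_2(a) = … = a_r L_r(a). -/
open Finset

/-- For a symmetric real matrix with positive entries there is a point `a` of
the open standard simplex at which the numbers `aᵢ·Lᵢ(a)` are all equal. -/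
theorem stmt5 {r : ℕ} (hr : 0 < r) (M : Matrix (Fin r) (Fin r) ℝ)
    (hsymm : M.IsSymm) (hpos : ∀ i j, 0 < M i j)
    (L : (Fin r → ℝ) → Fin r → ℝ)
    (hL : ∀ x i, L x i = ∑ j, M i j * x j) :
    ∃ a : Fin r → ℝ, (∀ i, 0 < a i) ∧ (∑ i, a i) = 1 ∧
      ∀ i j, a i * L a i = a j * L a j := by
  classical
  set Q : (Fin r → ℝ) → ℝ := fun x => ∑ i, ∑ j, M i j * (x i * x j) with hQdef
  set φ : (Fin r → ℝ) → ℝ := fun x => ∏ i, x i with hφdef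
  have hQcont : Continuous Q := by fun_prop
  have hφcont : Continuous φ := by fun_prop
  set K : Set (Fin r → ℝ) := {x | (∀ i, 0 ≤ x i) ∧ Q x = 1} with hKdef
  -- K is compact
  have hKclosed : IsClosed K := by
    have h1 : IsClosed {x : Fin r → ℝ | ∀ i, 0 ≤ x i} := by
      have : {x : Fin r → ℝ | ∀ i, 0 ≤ x i} = ⋂ i, (fun x : Fin r → ℝ => x i) ⁻¹' Set.Ici 0 := by
        ext x; simp
      rw [this]
      exact isClosed_iInter fun i => (isClosed_Ici).preimage (continuous_apply i)
    exact h1.inter (isClosed_singleton.preimage hQcont)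
  have hKsub : K ⊆ Set.pi Set.univ (fun k => Set.Icc (0:ℝ) (1 + 1 / M k k)) := by
    intro x hx k _
    obtain ⟨hx0, hxQ⟩ := hx
    refine ⟨hx0 k, ?_⟩
    by_cases hle : x k ≤ 1
    · have : 0 ≤ 1 / M k k := (div_pos one_pos (hpos k k)).le
      linarith
    · push_neg at hle
      have hterm : M k k * (x k * x k) ≤ Q x := by
        have h1 : M k k * (x k * x k) ≤ ∑ j, M k j * (x k * x j) := by
          apply Finset.single_le_sum (f := fun j => M k j * (x k * x j)) (fun j _ => by
            have := (hpos k j).le; have := hx0 j; have := hx0 k; positivity) (mem_univ k)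
        refine h1.trans ?_
        apply Finset.single_le_sum (f := fun i => ∑ j, M i j * (x i * x j)) (fun i _ => by
          apply Finset.sum_nonneg; intro j _
          have := (hpos i j).le; have := hx0 j; have := hx0 i; positivity) (mem_univ k)
      rw [hxQ] at hterm
      have h2 : x k * M k k ≤ 1 := by nlinarith [hpos k k]
      have h3 : x k ≤ 1 / M k k := by
        rw [le_div_iff₀ (hpos k k)]; linarith
      linarith
  have hKcomp : IsCompact K := by
    refine IsCompact.of_isClosed_subset ?_ hKclosed hKsub
    exact isCompact_univ_pi fun k => isCompact_Icc
  -- K is nonempty, via a positive point x₀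
  have hQ1pos : 0 < Q (fun _ => 1) := by
    apply Finset.sum_pos (fun i _ => Finset.sum_pos (fun j _ => by
      simpa using (hpos i j)) ⟨⟨0, hr⟩, mem_univ _⟩) ⟨⟨0, hr⟩, mem_univ _⟩
  set t : ℝ := Real.sqrt (Q (fun _ => 1))⁻¹ with htdef
  have htpos : 0 < t := Real.sqrt_pos.2 (by positivity)
  have hx₀K : (fun _ : Fin r => t) ∈ K := by
    constructor
    · intro i; exact htpos.le
    · have : Q (fun _ : Fin r => t) = t ^ 2 * Q (fun _ => 1) := by
        simp only [hQdef]
        rw [Finset.mul_sum]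
        refine Finset.sum_congr rfl fun i _ => ?_
        rw [Finset.mul_sum]
        refine Finset.sum_congr rfl fun j _ => ?_
        ring
      rw [this, htdef, Real.sq_sqrt (by positivity), inv_mul_cancel₀ hQ1pos.ne']
  -- maximize φ on K
  obtain ⟨a, haK, hamax⟩ := hKcomp.exists_isMaxOn ⟨_, hx₀K⟩ hφcont.continuousOn
  have hφapos : 0 < φ a := by
    have h1 : φ (fun _ : Fin r => t) ≤ φ a := hamax hx₀K
    have h2 : 0 < φ (fun _ : Fin r => t) := by
      simp only [hφdef]; exact Finset.prod_pos fun i _ => htpos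
    linarith
  have hapos : ∀ i, 0 < a i := by
    intro i
    rcases lt_or_eq_of_le (haK.1 i) with h | h
    · exact h
    · exfalso
      have : φ a = 0 := Finset.prod_eq_zero (mem_univ i) h.symm
      rw [this] at hφapos; exact lt_irrefl 0 hφapos
  have hQa : Q a = 1 := haK.2
  -- a is a local max of φ on {x | Q x = Q a}
  have hopen : IsOpen {x : Fin r → ℝ | ∀ i, 0 < x i} := by
    have : {x : Fin r → ℝ | ∀ i, 0 < x i} = ⋂ i, (fun x : Fin r → ℝ => x i) ⁻¹' Set.Ioi 0 := by
      ext x; simp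
    rw [this]
    exact isOpen_iInter_of_finite fun i => isOpen_Ioi.preimage (continuous_apply i)
  have hextr : IsLocalExtrOn φ {x | Q x = Q a} a := by
    right
    have hmem : {x : Fin r → ℝ | ∀ i, 0 < x i} ∈ nhdsWithin a {x | Q x = Q a} :=
      nhdsWithin_le_nhds (hopen.mem_nhds hapos)
    filter_upwards [hmem, self_mem_nhdsWithin] with x hx hx'
    exact hamax ⟨fun i => (hx i).le, hx'.trans hQa⟩
  -- derivatives
  have hQ' : HasStrictFDerivAt Q
      (∑ i, ∑ j, M i j • ((a i) • (ContinuousLinearMap.proj (R := ℝ)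
          (φ := fun _ : Fin r => ℝ) j) + (a j) • (ContinuousLinearMap.proj (R := ℝ)
          (φ := fun _ : Fin r => ℝ) i))) a := by
    apply HasStrictFDerivAt.fun_sum
    intro i _
    apply HasStrictFDerivAt.fun_sum
    intro j _
    exact ((hasStrictFDerivAt_apply i a).mul (hasStrictFDerivAt_apply j a)).const_mul (M i j)
  have hφ' : HasStrictFDerivAt φ
      (∑ i, (∏ j ∈ univ.erase i, a j) • (ContinuousLinearMap.proj (R := ℝ)
          (φ := fun _ : Fin r => ℝ) i)) a := hasStrictFDerivAt_finset_prod
  -- Lagrange multipliers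
  obtain ⟨b, c, hbc0, hbc⟩ :=
    hextr.exists_multipliers_of_hasStrictFDerivAt_1d hQ' hφ'
  -- evaluate at Pi.single k 1
  have hk : ∀ k, b * (∑ i, M i k * a i + ∑ j, M k j * a j)
      + c * (∏ j ∈ univ.erase k, a j) = 0 := by
    intro k
    have h := ContinuousLinearMap.ext_iff.mp hbc (Pi.single k 1)
    simp only [ContinuousLinearMap.add_apply, ContinuousLinearMap.coe_smul', Pi.smul_apply,
      ContinuousLinearMap.sum_apply, ContinuousLinearMap.smul_apply,
      ContinuousLinearMap.proj_apply, ContinuousLinearMap.zero_apply, smul_eq_mul,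
      Pi.single_apply, mul_ite, mul_one, mul_zero, mul_add] at h
    have e0 : ∀ x : Fin r, (∑ x_1 : Fin r, if x = k then M x x_1 * a x_1 else 0)
        = if x = k then ∑ x_1 : Fin r, M x x_1 * a x_1 else 0 := by
      intro x; split <;> simp
    have e1 : (∑ x : Fin r, ∑ x_1 : Fin r, ((if x_1 = k then M x x_1 * a x else 0)
          + if x = k then M x x_1 * a x_1 else 0))
        = ∑ i, M i k * a i + ∑ j, M k j * a j := by
      rw [show (∑ x : Fin r, ∑ x_1 : Fin r, ((if x_1 = k then M x x_1 * a x else 0)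
            + if x = k then M x x_1 * a x_1 else 0))
          = ∑ x : Fin r, ((∑ x_1 : Fin r, if x_1 = k then M x x_1 * a x else 0)
            + (∑ x_1 : Fin r, if x = k then M x x_1 * a x_1 else 0))
        from Finset.sum_congr rfl fun x _ => Finset.sum_add_distrib]
      rw [Finset.sum_add_distrib]
      congr 1
      · exact Finset.sum_congr rfl fun i _ => by
          rw [Finset.sum_ite_eq' univ k (fun x_1 => M i x_1 * a i)]; simp
      · rw [Finset.sum_congr rfl fun x _ => e0 x, Finset.sum_ite_eq' univ k]; simp
    have e2 : (∑ x : Fin r, if x = k then ∏ j ∈ univ.erase x, a j else 0)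
        = ∏ j ∈ univ.erase k, a j := by
      rw [Finset.sum_ite_eq' univ k (fun x => ∏ j ∈ univ.erase x, a j)]; simp
    rw [e1, e2] at h
    exact h
  -- rewrite using L and symmetry
  have hk2 : ∀ k, b * (2 * L a k) + c * (∏ j ∈ univ.erase k, a j) = 0 := by
    intro k
    have h := hk k
    have hsum : (∑ i, M i k * a i) = L a k := by
      rw [hL]
      exact Finset.sum_congr rfl fun i _ => by rw [hsymm.apply k i]
    have hsum2 : (∑ j, M k j * a j) = L a k := (hL a k).symm
    rw [hsum, hsum2] at h
    linarith
  -- b ≠ 0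
  have hProdpos : ∀ k, 0 < ∏ j ∈ univ.erase k, a j := fun k =>
    Finset.prod_pos fun j _ => hapos j
  have hb0 : b ≠ 0 := by
    intro hb
    have h := hk2 ⟨0, hr⟩
    rw [hb] at h
    simp only [zero_mul, zero_add] at h
    have hc : c = 0 := by
      rcases mul_eq_zero.mp h with h' | h'
      · exact h'
      · exact absurd h' (hProdpos ⟨0, hr⟩).ne'
    exact hbc0 (by simp [hb, hc, Prod.ext_iff])
  -- aₖ·Lₖ(a) is constant:  2b·(aₖ Lₖ) + c·P = 0
  have hkey : ∀ k, 2 * b * (a k * L a k) + c * (∏ j, a j) = 0 := by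
    intro k
    have h := hk2 k
    have hP : a k * (∏ j ∈ univ.erase k, a j) = ∏ j, a j :=
      Finset.mul_prod_erase univ a (mem_univ k)
    rw [← hP]
    linear_combination a k * h
  have heq : ∀ i j, a i * L a i = a j * L a j := by
    intro i j
    have hi := hkey i
    have hj := hkey j
    have h2b : (2 : ℝ) * b ≠ 0 := mul_ne_zero two_ne_zero hb0
    have : 2 * b * (a i * L a i) = 2 * b * (a j * L a j) := by linarith
    exact mul_left_cancel₀ h2b this
  -- rescale to the simplex
  set s : ℝ := ∑ i, a i with hsdef
  have hspos : 0 < s := Finset.sum_pos (fun i _ => hapos i) ⟨⟨0, hr⟩, mem_univ _⟩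
  refine ⟨fun i => a i / s, fun i => div_pos (hapos i) hspos, ?_, ?_⟩
  · rw [← Finset.sum_div, ← hsdef, div_self hspos.ne']
  · intro i j
    have hLdiv : ∀ k, L (fun i => a i / s) k = L a k / s := by
      intro k
      rw [hL, hL]
      simp [Finset.sum_div, mul_div_assoc]
    rw [hLdiv i, hLdiv j, div_mul_div_comm, div_mul_div_comm, heq i j]
end

section
/- Let b ≥ 2, let α be real, and suppose for infinitely many N there exist integers r(N), s(N), M(N) with s(N) → ∞ and rational numbers λ, μ, ν (not all zero) with ν ≠ 0 such that λ b^{r(N)} + μ b^{r(N)+s(N)} + ν M(N) = 0 and ξ(N) = M(N)/(b^{r(N)}(b^{s(N)}−1)) → α as N → ∞. Then μ + ν α = 0; in particular α is rational. -/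
open Filter

/-- If `λ b^{r(N)} + μ b^{r(N)+s(N)} + ν M(N) = 0` with `ν ≠ 0`,
`s(N) → ∞`, and `ξ(N) = M(N)/(b^{r(N)}(b^{s(N)}−1)) → α`, then
`μ + ν α = 0`; in particular `α` is rational. -/
theorem stmt13 (b : ℕ) (hb : 2 ≤ b) (α : ℝ) (lam mu nu : ℚ) (hnu : nu ≠ 0)
    (r s : ℕ → ℕ) (M : ℕ → ℤ)
    (hs : Tendsto s atTop atTop)
    (heq : ∀ N : ℕ, (lam : ℝ) * (b : ℝ) ^ (r N) +
      (mu : ℝ) * (b : ℝ) ^ (r N + s N) + (nu : ℝ) * (M N : ℝ) = 0)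
    (hlim : Tendsto
      (fun N => (M N : ℝ) / ((b : ℝ) ^ (r N) * ((b : ℝ) ^ (s N) - 1)))
      atTop (nhds α)) :
    (mu : ℝ) + (nu : ℝ) * α = 0 ∧ ∃ q : ℚ, (q : ℝ) = α := by
  have hb1 : (1 : ℝ) < (b : ℝ) := by exact_mod_cast hb.trans_lt' one_lt_two
  have hnuR : (nu : ℝ) ≠ 0 := by exact_mod_cast hnu
  have hpow : Tendsto (fun N => (b : ℝ) ^ (s N)) atTop atTop :=
    (tendsto_pow_atTop_atTop_of_one_lt hb1).comp hs
  have hden : Tendsto (fun N => (b : ℝ) ^ (s N) - 1) atTop atTop :=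
    tendsto_atTop_add_const_right _ (-1) hpow
  have hinv : Tendsto (fun N => ((b : ℝ) ^ (s N) - 1)⁻¹) atTop (nhds 0) :=
    hden.inv_tendsto_atTop
  have hlim2 : Tendsto
      (fun N => (M N : ℝ) / ((b : ℝ) ^ (r N) * ((b : ℝ) ^ (s N) - 1)))
      atTop (nhds (-((mu : ℝ) / nu))) := by
    have hconst : Tendsto
        (fun N => -((mu : ℝ) / nu) + (-(lam + mu) / nu) * ((b : ℝ) ^ (s N) - 1)⁻¹)
        atTop (nhds (-((mu : ℝ) / nu))) := by
      have h := hinv.const_mul ((-((lam:ℝ) + mu)) / nu)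
      have hc : Tendsto (fun _ : ℕ => -((mu:ℝ)/nu)) atTop (nhds (-((mu:ℝ)/nu))) :=
        tendsto_const_nhds
      simpa using hc.add h
    refine Tendsto.congr' ?_ hconst
    filter_upwards [hs.eventually_ge_atTop 1] with N hN
    have hx : (0 : ℝ) < (b : ℝ) ^ (r N) := by positivity
    have hy : (1 : ℝ) < (b : ℝ) ^ (s N) := one_lt_pow₀ hb1 (by omega)
    have hy1 : (b : ℝ) ^ (s N) - 1 ≠ 0 := by linarith
    have hM : (nu : ℝ) * M N = -((lam : ℝ) * (b:ℝ) ^ (r N)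
        + (mu : ℝ) * ((b:ℝ) ^ (r N) * (b:ℝ) ^ (s N))) := by
      have := heq N
      rw [pow_add] at this
      linarith
    have hM' : (M N : ℝ) = -((lam:ℝ) * (b:ℝ) ^ (r N)
        + (mu : ℝ) * ((b:ℝ) ^ (r N) * (b:ℝ) ^ (s N))) / nu := by
      rw [eq_div_iff hnuR]; linarith [hM]
    rw [eq_div_iff (mul_ne_zero hx.ne' hy1), hM']
    field_simp
    ring
  have hα : α = -((mu : ℝ) / nu) := tendsto_nhds_unique hlim hlim2
  constructor
  · rw [hα]; field_simp; ring
  · exact ⟨-(mu / nu), by push_cast [hα]; ring⟩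
end
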